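/- Let g : {c ∈ ℝ^N : ‖c‖ ≤ a} → ℝ^D be given by g(c) = g₀ + Ac + h(c), where A is a D×N real matrix whose r largest singular values are all at least σ > 0, and h satisfies ‖h(c)‖ ≤ L‖c‖² for all ‖c‖ ≤ a. Then for every ε with 0 < ε^{1/2} ≤ a, the probability of the set {c : ‖g(c)‖ ≤ Lε} relative to the ball {c : ‖c‖ ≤ ε^{1/2}} is at most N! · 2^r · L^r · ε^{r/2} / σ^r. -/

import Mathlib

open MeasureTheory Metric

private lemma nat_pow_le_sq_factorial (n : ℕ) : n ^ n ≤ n.factorial * n.factorial := by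
  calc n ^ n = ∏ _i ∈ Finset.range n, n := by rw [Finset.prod_const, Finset.card_range]
    _ ≤ ∏ i ∈ Finset.range n, (i + 1) * (n - i) := by
        apply Finset.prod_le_prod'
        intro i hi
        have hi' : i < n := Finset.mem_range.1 hi
        have h2 : i ≤ i * (n - i) := Nat.le_mul_of_pos_right i (by omega)
        calc n = i + (n - i) := by omega
          _ ≤ i * (n - i) + (n - i) := Nat.add_le_add_right h2 _
          _ = (i + 1) * (n - i) := by ring
    _ = (∏ i ∈ Finset.range n, (i + 1)) * ∏ i ∈ Finset.range n, (n - i) :=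
        Finset.prod_mul_distrib
    _ = n.factorial * n.factorial := by
        rw [Finset.prod_range_add_one_eq_factorial]
        congr 1
        rw [← Finset.prod_range_reflect (fun j => n - j) n]
        rw [← Finset.prod_range_add_one_eq_factorial]
        apply Finset.prod_congr rfl
        intro i hi
        have : i < n := Finset.mem_range.1 hi
        omega

private lemma abs_coord_le_norm {ι : Type*} [Fintype ι] (x : EuclideanSpace ℝ ι) (i : ι) :
    |x i| ≤ ‖x‖ := by
  rw [EuclideanSpace.norm_eq, ← Real.sqrt_sq_eq_abs]
  apply Real.sqrt_le_sqrt
  calc x i ^ 2 = ‖x i‖ ^ 2 := by rw [Real.norm_eq_abs, sq_abs]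
    _ ≤ ∑ j, ‖x j‖ ^ 2 :=
        Finset.single_le_sum (f := fun j => ‖x j‖ ^ 2) (fun j _ => sq_nonneg _) (Finset.mem_univ i)

/-- A set in `ℝ^k` (pi measure) whose points are pairwise at coordinate distance at most `d`
has volume at most `d ^ k`. -/
private lemma volume_le_of_bounded {k : ℕ} (t : Set (Fin k → ℝ)) {d : ℝ}
    (hd : ∀ x ∈ t, ∀ y ∈ t, ∀ i, |x i - y i| ≤ d) :
    volume t ≤ ENNReal.ofReal d ^ k := by
  rcases t.eq_empty_or_nonempty with h | ⟨x₀, hx₀⟩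
  · simp [h]
  set P : Fin k → Set ℝ := fun i => {z | ∃ x ∈ t, x i = z} with hP
  have hne : ∀ i, (P i).Nonempty := fun i => ⟨x₀ i, x₀, hx₀, rfl⟩
  have hbdd : ∀ i, BddBelow (P i) := by
    intro i
    refine ⟨x₀ i - d, ?_⟩
    rintro z ⟨x, hx, rfl⟩
    have := abs_le.1 (hd x₀ hx₀ x hx i)
    linarith [this.2]
  set A : Fin k → ℝ := fun i => sInf (P i) with hA
  have hsub : t ⊆ Set.pi Set.univ fun i => Set.Icc (A i) (A i + d) := by
    intro x hx i _
    constructor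
    · exact csInf_le (hbdd i) ⟨x, hx, rfl⟩
    · have hlb : x i - d ≤ A i := by
        apply le_csInf (hne i)
        rintro z ⟨y, hy, rfl⟩
        have := abs_le.1 (hd x hx y hy i)
        linarith [this.2]
      linarith
  calc volume t ≤ volume (Set.pi Set.univ fun i => Set.Icc (A i) (A i + d)) :=
        measure_mono hsub
    _ = ∏ i : Fin k, volume (Set.Icc (A i) (A i + d)) := volume_pi_pi _
    _ = ENNReal.ofReal d ^ k := by
        simp [Real.volume_Icc]

set_option maxHeartbeats 2000000 in
/-- Nonlinear transfer of volume lemma. If `g(c) = g₀ + Ac + h(c)` on the ball `‖c‖ ≤ a`,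
with `‖h(c)‖ ≤ L‖c‖²`, and the `r` largest singular values of `A` are at least `σ > 0`,
then for `0 < √ε ≤ a` the probability of `‖g(c)‖ ≤ Lε` relative to the ball of radius `√ε`
is at most `N! 2^r L^r ε^{r/2} / σ^r`. -/
theorem stmt1 (D N r : ℕ) (A : Matrix (Fin D) (Fin N) ℝ)
    (g₀ : EuclideanSpace ℝ (Fin D)) (σ : ℝ) (hσ : 0 < σ)
    (hA : ∃ V : Submodule ℝ (EuclideanSpace ℝ (Fin N)),
      Module.finrank ℝ V = r ∧ ∀ v ∈ V, σ * ‖v‖ ≤ ‖Matrix.toEuclideanLin A v‖)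
    (L a : ℝ) (hL : 0 < L) (ha : 0 < a)
    (g h : EuclideanSpace ℝ (Fin N) → EuclideanSpace ℝ (Fin D))
    (hg : ∀ c, ‖c‖ ≤ a → g c = g₀ + Matrix.toEuclideanLin A c + h c)
    (hh : ∀ c, ‖c‖ ≤ a → ‖h c‖ ≤ L * ‖c‖ ^ 2)
    (ε : ℝ) (hε : 0 < ε) (hεa : Real.sqrt ε ≤ a) :
    volume ({c : EuclideanSpace ℝ (Fin N) | ‖g c‖ ≤ L * ε} ∩ closedBall 0 (Real.sqrt ε))
        / volume (closedBall (0 : EuclideanSpace ℝ (Fin N)) (Real.sqrt ε))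
      ≤ ENNReal.ofReal ((N.factorial : ℝ) * 2 ^ r * L ^ r * Real.sqrt ε ^ r / σ ^ r) := by
  obtain ⟨V, hVr, hVσ⟩ := hA
  have hεs : 0 < Real.sqrt ε := Real.sqrt_pos.2 hε
  have hεε : Real.sqrt ε * Real.sqrt ε = ε := Real.mul_self_sqrt hε.le
  set Aₗ : EuclideanSpace ℝ (Fin N) →ₗ[ℝ] EuclideanSpace ℝ (Fin D) := Matrix.toEuclideanLin A
    with hAₗ
  set S' : Set (EuclideanSpace ℝ (Fin N)) :=
    {c | ‖g₀ + Aₗ c‖ ≤ 2 * (L * ε)} ∩ closedBall 0 (Real.sqrt ε) with hS'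
  -- the original set is contained in `S'`
  have hSS' : {c : EuclideanSpace ℝ (Fin N) | ‖g c‖ ≤ L * ε} ∩ closedBall 0 (Real.sqrt ε)
      ⊆ S' := by
    rintro c ⟨hc1, hc2⟩
    have hc2' : ‖c‖ ≤ Real.sqrt ε := by simpa [mem_closedBall_zero_iff] using hc2
    have hca : ‖c‖ ≤ a := le_trans hc2' hεa
    refine ⟨?_, hc2⟩
    have hc1' : ‖g c‖ ≤ L * ε := hc1
    have hgc := hg c hca
    have hhc := hh c hca
    have hcsq : ‖c‖ ^ 2 ≤ ε := by nlinarith [norm_nonneg c]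
    have heq : g₀ + Aₗ c = g c - h c := by rw [hgc]; abel
    show ‖g₀ + Aₗ c‖ ≤ 2 * (L * ε)
    rw [heq]
    calc ‖g c - h c‖ ≤ ‖g c‖ + ‖h c‖ := norm_sub_le _ _
      _ ≤ 2 * (L * ε) := by nlinarith
  have hS'meas : MeasurableSet S' := by
    apply MeasurableSet.inter
    · have hcont : Continuous fun c : EuclideanSpace ℝ (Fin N) => ‖g₀ + Aₗ c‖ :=
        (continuous_const.add Aₗ.continuous_of_finiteDimensional).norm
      exact measurableSet_le hcont.measurable measurable_const
    · exact measurableSet_closedBall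
  -- dimensions
  have hrN : r ≤ N := by
    have := V.finrank_le
    rw [finrank_euclideanSpace_fin, hVr] at this
    exact this
  set s := N - r with hs
  have hsrN : r + s = N := by omega
  have hds : Module.finrank ℝ ↥Vᗮ = s := by
    have := V.finrank_add_finrank_orthogonal
    rw [finrank_euclideanSpace_fin, hVr] at this
    omega
  -- adapted orthonormal basis
  set b₁ : OrthonormalBasis (Fin r) ℝ V := (stdOrthonormalBasis ℝ V).reindex (finCongr hVr)
    with hb₁
  set b₂ : OrthonormalBasis (Fin s) ℝ ↥Vᗮ :=
    (stdOrthonormalBasis ℝ ↥Vᗮ).reindex (finCongr hds) with hb₂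
  set f : Fin s ⊕ Fin r → EuclideanSpace ℝ (Fin N) :=
    Sum.elim (fun i => (b₂ i : EuclideanSpace ℝ (Fin N)))
      (fun i => (b₁ i : EuclideanSpace ℝ (Fin N))) with hf
  have hon : Orthonormal ℝ f := by
    rw [orthonormal_iff_ite]
    rintro (i | i) (j | j)
    · have := orthonormal_iff_ite.mp b₂.orthonormal i j
      simpa [hf, Submodule.coe_inner] using this
    · simp only [hf, Sum.elim_inl, Sum.elim_inr]
      rw [if_neg (by simp)]
      exact Submodule.inner_left_of_mem_orthogonal (b₁ j).2 (b₂ i).2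
    · simp only [hf, Sum.elim_inl, Sum.elim_inr]
      rw [if_neg (by simp)]
      exact Submodule.inner_right_of_mem_orthogonal (b₁ i).2 (b₂ j).2
    · have := orthonormal_iff_ite.mp b₁.orthonormal i j
      simpa [hf, Submodule.coe_inner] using this
  have hsp₁ : Submodule.span ℝ (Set.range fun i => (b₁ i : EuclideanSpace ℝ (Fin N))) = V := by
    have hr : (Set.range fun i => (b₁ i : EuclideanSpace ℝ (Fin N)))
        = V.subtype '' Set.range b₁ := by rw [← Set.range_comp]; rfl
    rw [hr, Submodule.span_image, ← b₁.coe_toBasis, b₁.toBasis.span_eq, Submodule.map_top,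
      Submodule.range_subtype]
  have hsp₂ : Submodule.span ℝ (Set.range fun i => (b₂ i : EuclideanSpace ℝ (Fin N))) = Vᗮ := by
    have hr : (Set.range fun i => (b₂ i : EuclideanSpace ℝ (Fin N)))
        = Vᗮ.subtype '' Set.range b₂ := by rw [← Set.range_comp]; rfl
    rw [hr, Submodule.span_image, ← b₂.coe_toBasis, b₂.toBasis.span_eq, Submodule.map_top,
      Submodule.range_subtype]
  have hsp : ⊤ ≤ Submodule.span ℝ (Set.range f) := by
    rw [hf, Set.Sum.elim_range, Submodule.span_union, hsp₁, hsp₂, sup_comm,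
      Submodule.sup_orthogonal_of_hasOrthogonalProjection]
  set b : OrthonormalBasis (Fin s ⊕ Fin r) ℝ (EuclideanSpace ℝ (Fin N)) :=
    OrthonormalBasis.mk hon hsp with hb
  have hbf : ⇑b = f := by rw [hb]; exact OrthonormalBasis.coe_mk hon hsp
  have hbV : ∀ i, b (Sum.inr i) ∈ V := fun i => by rw [hbf]; exact (b₁ i).2
  -- measure preserving chain
  set e₂ := (MeasurableEquiv.toLp 2 (Fin s ⊕ Fin r → ℝ)).symm with he₂
  set e₃ := MeasurableEquiv.sumPiEquivProdPi (fun _ : Fin s ⊕ Fin r => ℝ) with he₃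
  have mp : MeasurePreserving (fun c : EuclideanSpace ℝ (Fin N) => e₃ (e₂ (b.repr c)))
      volume volume :=
    ((volume_measurePreserving_sumPiEquivProdPi (fun _ : Fin s ⊕ Fin r => ℝ)).comp
      ((EuclideanSpace.volume_preserving_symm_measurableEquiv_toLp (Fin s ⊕ Fin r)).comp
        b.measurePreserving_repr))
  set Ψ : (Fin s → ℝ) × (Fin r → ℝ) → EuclideanSpace ℝ (Fin N) :=
    fun p => b.repr.symm (e₂.symm (e₃.symm p)) with hΨ
  have hΨmeas : Measurable Ψ :=
    (b.repr.symm.continuous.measurable).comp ((e₂.symm.measurable).comp e₃.symm.measurable)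
  set T : Set ((Fin s → ℝ) × (Fin r → ℝ)) := Ψ ⁻¹' S' with hT
  have hTmeas : MeasurableSet T := hΨmeas hS'meas
  have hpre : (fun c : EuclideanSpace ℝ (Fin N) => e₃ (e₂ (b.repr c))) ⁻¹' T = S' := by
    ext c
    simp [hT, hΨ]
  have hΨcoord : ∀ (w : Fin s → ℝ) (v : Fin r → ℝ), b.repr (Ψ (w, v)) = e₂.symm (e₃.symm (w, v)) := by
    intro w v
    simp [hΨ]
  have hΨl : ∀ (w : Fin s → ℝ) (v : Fin r → ℝ) (i : Fin s),
      b.repr (Ψ (w, v)) (Sum.inl i) = w i := by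
    intro w v i; rw [hΨcoord]; rfl
  have hΨr : ∀ (w : Fin s → ℝ) (v : Fin r → ℝ) (i : Fin r),
      b.repr (Ψ (w, v)) (Sum.inr i) = v i := by
    intro w v i; rw [hΨcoord]; rfl
  set d : ℝ := 4 * (L * ε) / σ with hd
  have hd0 : 0 ≤ d := by positivity
  -- fiber bound
  have hfiber : ∀ w : Fin s → ℝ, volume (Prod.mk w ⁻¹' T)
      ≤ (Set.pi Set.univ fun _ : Fin s => Set.Icc (-Real.sqrt ε) (Real.sqrt ε)).indicator
          (fun _ => ENNReal.ofReal d ^ r) w := by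
    intro w
    by_cases hw : w ∈ Set.pi Set.univ fun _ : Fin s => Set.Icc (-Real.sqrt ε) (Real.sqrt ε)
    · rw [Set.indicator_of_mem hw]
      apply volume_le_of_bounded
      intro v₁ hv₁ v₂ hv₂ i
      set c₁ := Ψ (w, v₁) with hc₁
      set c₂ := Ψ (w, v₂) with hc₂
      have hc₁S : c₁ ∈ S' := hv₁
      have hc₂S : c₂ ∈ S' := hv₂
      have hmemV : c₁ - c₂ ∈ V := by
        have h1 : c₁ - c₂ = ∑ j, b.repr (c₁ - c₂) j • b j := (b.sum_repr _).symm
        rw [h1]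
        apply Submodule.sum_mem
        rintro (j | j) _
        · have hz : b.repr (c₁ - c₂) (Sum.inl j) = 0 := by
            rw [map_sub]
            show b.repr c₁ (Sum.inl j) - b.repr c₂ (Sum.inl j) = 0
            rw [hc₁, hc₂, hΨl, hΨl, sub_self]
          rw [hz, zero_smul]
          exact V.zero_mem
        · exact Submodule.smul_mem _ _ (hbV j)
      have hAd : ‖Aₗ (c₁ - c₂)‖ ≤ 4 * (L * ε) := by
        have heq : Aₗ (c₁ - c₂) = (g₀ + Aₗ c₁) - (g₀ + Aₗ c₂) := by rw [map_sub]; abel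
        rw [heq]
        calc ‖(g₀ + Aₗ c₁) - (g₀ + Aₗ c₂)‖ ≤ ‖g₀ + Aₗ c₁‖ + ‖g₀ + Aₗ c₂‖ := norm_sub_le _ _
          _ ≤ 4 * (L * ε) := by
              have h1 := hc₁S.1
              have h2 := hc₂S.1
              simp only [Set.mem_setOf_eq] at h1 h2
              linarith
      have hnd : ‖c₁ - c₂‖ ≤ d := by
        have := hVσ _ hmemV
        rw [hd, le_div_iff₀ hσ]
        calc ‖c₁ - c₂‖ * σ = σ * ‖c₁ - c₂‖ := mul_comm _ _
          _ ≤ ‖Aₗ (c₁ - c₂)‖ := this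
          _ ≤ 4 * (L * ε) := hAd
      calc |v₁ i - v₂ i| = |b.repr (c₁ - c₂) (Sum.inr i)| := by
            rw [map_sub]
            show _ = |b.repr c₁ (Sum.inr i) - b.repr c₂ (Sum.inr i)|
            rw [hc₁, hc₂, hΨr, hΨr]
        _ ≤ ‖b.repr (c₁ - c₂)‖ := abs_coord_le_norm _ _
        _ = ‖c₁ - c₂‖ := b.repr.norm_map _
        _ ≤ d := hnd
    · rw [Set.indicator_of_notMem hw]
      have hempty : Prod.mk w ⁻¹' T = ∅ := by
        rw [Set.eq_empty_iff_forall_notMem]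
        intro v hv
        apply hw
        intro i _
        have hc : Ψ (w, v) ∈ S' := hv
        have hcb : ‖Ψ (w, v)‖ ≤ Real.sqrt ε := by
          simpa [mem_closedBall_zero_iff] using hc.2
        have habs : |w i| ≤ Real.sqrt ε := by
          calc |w i| = |b.repr (Ψ (w, v)) (Sum.inl i)| := by rw [hΨl]
            _ ≤ ‖b.repr (Ψ (w, v))‖ := abs_coord_le_norm _ _
            _ = ‖Ψ (w, v)‖ := b.repr.norm_map _
            _ ≤ Real.sqrt ε := hcb
        exact abs_le.1 habs
      simp [hempty]
  -- volume of S' bound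
  have hvolS' : volume S' ≤ ENNReal.ofReal d ^ r * ENNReal.ofReal (2 * Real.sqrt ε) ^ s := by
    have hveq : volume S' = volume T := by
      rw [← hpre]
      exact mp.measure_preimage hTmeas.nullMeasurableSet
    rw [hveq]
    have hcubemeas : MeasurableSet
        (Set.pi Set.univ fun _ : Fin s => Set.Icc (-Real.sqrt ε) (Real.sqrt ε)) :=
      MeasurableSet.univ_pi fun _ => measurableSet_Icc
    calc volume T = ∫⁻ w, volume (Prod.mk w ⁻¹' T) := by
          rw [Measure.volume_eq_prod, Measure.prod_apply hTmeas]
      _ ≤ ∫⁻ w, (Set.pi Set.univ fun _ : Fin s => Set.Icc (-Real.sqrt ε) (Real.sqrt ε)).indicator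
            (fun _ => ENNReal.ofReal d ^ r) w := lintegral_mono hfiber
      _ = ENNReal.ofReal d ^ r
            * volume (Set.pi Set.univ fun _ : Fin s => Set.Icc (-Real.sqrt ε) (Real.sqrt ε)) := by
          rw [lintegral_indicator hcubemeas]
          simp [Measure.restrict_apply MeasurableSet.univ]
      _ = ENNReal.ofReal d ^ r * ENNReal.ofReal (2 * Real.sqrt ε) ^ s := by
          congr 1
          rw [volume_pi_pi]
          have : Real.sqrt ε - -Real.sqrt ε = 2 * Real.sqrt ε := by ring
          simp [Real.volume_Icc, this]
  -- lower bound for the ball volume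
  have hball : ENNReal.ofReal (2 * Real.sqrt ε / Real.sqrt N) ^ N
      ≤ volume (closedBall (0 : EuclideanSpace ℝ (Fin N)) (Real.sqrt ε)) := by
    set q : ℝ := Real.sqrt ε / Real.sqrt N with hq
    have hq0 : 0 ≤ q := div_nonneg (Real.sqrt_nonneg _) (Real.sqrt_nonneg _)
    have hcubesub : (MeasurableEquiv.toLp 2 (Fin N → ℝ)).symm ⁻¹'
        (Set.pi Set.univ fun _ : Fin N => Set.Icc (-q) q)
        ⊆ closedBall (0 : EuclideanSpace ℝ (Fin N)) (Real.sqrt ε) := by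
      intro x hx
      rw [mem_closedBall_zero_iff, EuclideanSpace.norm_eq]
      have hxi : ∀ i, |x i| ≤ q := fun i => abs_le.2 (hx i (Set.mem_univ _))
      have hsum : ∑ i, ‖x i‖ ^ 2 ≤ ε := by
        have h1 : ∑ i, ‖x i‖ ^ 2 ≤ ∑ _i : Fin N, q ^ 2 := by
          apply Finset.sum_le_sum
          intro i _
          rw [Real.norm_eq_abs]
          exact pow_le_pow_left₀ (abs_nonneg _) (hxi i) 2
        have h2 : ∑ _i : Fin N, q ^ 2 = N * q ^ 2 := by
          rw [Finset.sum_const, Finset.card_univ, Fintype.card_fin, nsmul_eq_mul]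
        rw [h2] at h1
        rcases Nat.eq_zero_or_pos N with hN | hN
        · subst hN; simpa using h1.trans_eq (by norm_num) |>.trans hε.le
        · have hNpos : (0 : ℝ) < N := by exact_mod_cast hN
          have hqsq : q ^ 2 = ε / N := by
            rw [hq, div_pow, Real.sq_sqrt hε.le, Real.sq_sqrt hNpos.le]
          rw [hqsq] at h1
          calc ∑ i, ‖x i‖ ^ 2 ≤ N * (ε / N) := h1
            _ = ε := by field_simp
      exact Real.sqrt_le_sqrt hsum
    have hcubemeas : MeasurableSet (Set.pi Set.univ fun _ : Fin N => Set.Icc (-q) q) :=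
      MeasurableSet.univ_pi fun _ => measurableSet_Icc
    have hvolcube : volume ((MeasurableEquiv.toLp 2 (Fin N → ℝ)).symm ⁻¹'
        (Set.pi Set.univ fun _ : Fin N => Set.Icc (-q) q))
        = ENNReal.ofReal (2 * q) ^ N := by
      rw [(EuclideanSpace.volume_preserving_symm_measurableEquiv_toLp (Fin N)).measure_preimage
        hcubemeas.nullMeasurableSet, volume_pi_pi]
      have : q - -q = 2 * q := by ring
      simp [Real.volume_Icc, this]
    have h2q : 2 * Real.sqrt ε / Real.sqrt N = 2 * q := by rw [hq]; ring
    rw [h2q, ← hvolcube]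
    exact measure_mono hcubesub
  -- combination
  have hballne : volume (closedBall (0 : EuclideanSpace ℝ (Fin N)) (Real.sqrt ε)) ≠ 0 :=
    (measure_closedBall_pos volume _ hεs).ne'
  have hballfin : volume (closedBall (0 : EuclideanSpace ℝ (Fin N)) (Real.sqrt ε)) ≠ ⊤ :=
    measure_closedBall_lt_top.ne
  rw [ENNReal.div_le_iff hballne hballfin]
  set Q : ℝ := (N.factorial : ℝ) * 2 ^ r * L ^ r * Real.sqrt ε ^ r / σ ^ r with hQ
  have hQ0 : 0 ≤ Q := by positivity
  -- the key real inequality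
  have hP : 0 < Real.sqrt N ^ N := by
    rcases Nat.eq_zero_or_pos N with hN | hN
    · subst hN; norm_num
    · have : (0 : ℝ) < N := by exact_mod_cast hN
      positivity
  have hfact : Real.sqrt N ^ N ≤ (N.factorial : ℝ) := by
    have h2 : (Real.sqrt N ^ N) ^ 2 = (N : ℝ) ^ N := by
      rw [← pow_mul, mul_comm, pow_mul, Real.sq_sqrt (by positivity : (0:ℝ) ≤ (N:ℝ))]
    have h3 : ((N : ℝ) ^ N) ≤ ((N.factorial : ℝ)) ^ 2 := by
      have := nat_pow_le_sq_factorial N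
      have h4 : ((N ^ N : ℕ) : ℝ) ≤ ((N.factorial * N.factorial : ℕ) : ℝ) := by exact_mod_cast this
      push_cast at h4
      nlinarith
    calc Real.sqrt N ^ N = Real.sqrt ((Real.sqrt N ^ N) ^ 2) := (Real.sqrt_sq hP.le).symm
      _ = Real.sqrt ((N : ℝ) ^ N) := by rw [h2]
      _ ≤ Real.sqrt (((N.factorial : ℝ)) ^ 2) := Real.sqrt_le_sqrt h3
      _ = (N.factorial : ℝ) := Real.sqrt_sq (by positivity)
  have hreal : d ^ r * (2 * Real.sqrt ε) ^ s ≤ Q * (2 * Real.sqrt ε / Real.sqrt N) ^ N := by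
    have hd' : d = 2 * L * Real.sqrt ε / σ * (2 * Real.sqrt ε) := by
      rw [hd]
      field_simp
      nlinarith [hεε]
    have e1 : d ^ r * (2 * Real.sqrt ε) ^ s
        = 2 ^ r * L ^ r * Real.sqrt ε ^ r / σ ^ r * (2 * Real.sqrt ε) ^ N := by
      rw [hd', mul_pow, mul_assoc, ← pow_add, hsrN, div_pow, mul_pow, mul_pow]
    have hQP : 1 ≤ (N.factorial : ℝ) / Real.sqrt N ^ N := (one_le_div hP).2 hfact
    have hstuff : 0 ≤ 2 ^ r * L ^ r * Real.sqrt ε ^ r / σ ^ r * (2 * Real.sqrt ε) ^ N := by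
      positivity
    calc d ^ r * (2 * Real.sqrt ε) ^ s
        = 2 ^ r * L ^ r * Real.sqrt ε ^ r / σ ^ r * (2 * Real.sqrt ε) ^ N := e1
      _ = 2 ^ r * L ^ r * Real.sqrt ε ^ r / σ ^ r * (2 * Real.sqrt ε) ^ N * 1 := by ring
      _ ≤ 2 ^ r * L ^ r * Real.sqrt ε ^ r / σ ^ r * (2 * Real.sqrt ε) ^ N
            * ((N.factorial : ℝ) / Real.sqrt N ^ N) := by
          exact mul_le_mul_of_nonneg_left hQP hstuff
      _ = Q * (2 * Real.sqrt ε / Real.sqrt N) ^ N := by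
          rw [hQ, div_pow]; ring
  calc volume ({c : EuclideanSpace ℝ (Fin N) | ‖g c‖ ≤ L * ε} ∩ closedBall 0 (Real.sqrt ε))
      ≤ volume S' := measure_mono hSS'
    _ ≤ ENNReal.ofReal d ^ r * ENNReal.ofReal (2 * Real.sqrt ε) ^ s := hvolS'
    _ = ENNReal.ofReal (d ^ r * (2 * Real.sqrt ε) ^ s) := by
        rw [← ENNReal.ofReal_pow hd0, ← ENNReal.ofReal_pow (by positivity : (0:ℝ) ≤ 2 * Real.sqrt ε),
          ← ENNReal.ofReal_mul (pow_nonneg hd0 r)]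
    _ ≤ ENNReal.ofReal (Q * (2 * Real.sqrt ε / Real.sqrt N) ^ N) :=
        ENNReal.ofReal_le_ofReal hreal
    _ = ENNReal.ofReal Q * ENNReal.ofReal ((2 * Real.sqrt ε / Real.sqrt N) ^ N) :=
        ENNReal.ofReal_mul hQ0
    _ ≤ ENNReal.ofReal Q
          * volume (closedBall (0 : EuclideanSpace ℝ (Fin N)) (Real.sqrt ε)) := by
        apply mul_le_mul_right
        rw [ENNReal.ofReal_pow (by positivity)]
        exact hball
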